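/- arXiv:2603.15059 — 5 statements merged into one kernel-verified Lean document; each statement's English description precedes it below -/
import Mathlib

section
/- If g : ℝ^{m×n} → ℝ is differentiable and L-Hölder smooth with exponent ν ∈ (0,1] (i.e. ‖∇g(W₁) − ∇g(W₂)‖_F ≤ L‖W₁ − W₂‖_F^ν for all W₁, W₂), with L > 0 satisfying L < 2L^ν, and both g^⋆ := inf g ∈ ℝ and g^{⋆⋆} := sup g ∈ ℝ are finite, then for every W ∈ ℝ^{m×n}: ‖∇g(W)‖_F² ≤ 2L^{1+ν}(g^{⋆⋆} − g^⋆)/(2L^ν − L) + (1−ν)L/((1+ν)(2L^ν − L)). -/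
open scoped InnerProductSpace BigOperators

section aux
variable {F : Type*} [NormedAddCommGroup F] [InnerProductSpace ℝ F] [CompleteSpace F]

lemma line_hasDerivAt (g : F → ℝ) (hdiff : Differentiable ℝ g) (W V : F) (s : ℝ) :
    HasDerivAt (fun t : ℝ => g (W + t • V)) ⟪gradient g (W + s • V), V⟫_ℝ s := by
  have h1 : HasDerivAt (fun t : ℝ => W + t • V) V s := by
    simpa using ((hasDerivAt_id s).smul_const V).const_add W
  have h2 : HasFDerivAt g ((InnerProductSpace.toDualMap ℝ F (gradient g (W + s • V)) : F →L[ℝ] ℝ)) (W + s • V) :=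
    hasGradientAt_iff_hasFDerivAt.mp (hdiff (W + s • V)).hasGradientAt
  exact (h2.comp_hasDerivAt s h1).congr_deriv (by simp)

lemma descent (g : F → ℝ) (L ν : ℝ) (hL : 0 < L) (hν : ν ∈ Set.Ioc (0:ℝ) 1)
    (hdiff : Differentiable ℝ g)
    (hholder : ∀ W₁ W₂ : F, ‖gradient g W₁ - gradient g W₂‖ ≤ L * ‖W₁ - W₂‖ ^ ν)
    (W V : F) :
    g (W + V) ≤ g W + ⟪gradient g W, V⟫_ℝ + L / (1 + ν) * ‖V‖ ^ (1 + ν) := by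
  obtain ⟨hν0, hν1⟩ := hν
  have h1ν : (0:ℝ) < 1 + ν := by linarith
  set φ : ℝ → ℝ := fun s =>
    g (W + s • V) - s * ⟪gradient g W, V⟫_ℝ - L / (1 + ν) * s ^ (1 + ν) * ‖V‖ ^ (1 + ν) with hφ
  have hder : ∀ s : ℝ, HasDerivAt φ
      (⟪gradient g (W + s • V), V⟫_ℝ - ⟪gradient g W, V⟫_ℝ
        - L / (1 + ν) * ((1 + ν) * s ^ ν) * ‖V‖ ^ (1 + ν)) s := by
    intro s
    have hr : HasDerivAt (fun s : ℝ => s ^ (1 + ν)) ((1 + ν) * s ^ ((1 + ν) - 1)) s :=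
      Real.hasDerivAt_rpow_const (Or.inr (by linarith))
    have hr' : HasDerivAt (fun s : ℝ => s ^ (1 + ν)) ((1 + ν) * s ^ ν) s := by
      rwa [show (1:ℝ) + ν - 1 = ν by ring] at hr
    have hmul : HasDerivAt (fun s : ℝ => s * ⟪gradient g W, V⟫_ℝ) ⟪gradient g W, V⟫_ℝ s := by
      simpa using (hasDerivAt_id s).mul_const ⟪gradient g W, V⟫_ℝ
    exact ((line_hasDerivAt g hdiff W V s).sub hmul).sub
      ((hr'.const_mul (L / (1 + ν))).mul_const (‖V‖ ^ (1 + ν)))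
  have hanti : AntitoneOn φ (Set.Icc 0 1) := by
    apply antitoneOn_of_deriv_nonpos (convex_Icc 0 1)
    · exact fun s _ => (hder s).differentiableAt.continuousAt.continuousWithinAt
    · exact fun s _ => (hder s).differentiableAt.differentiableWithinAt
    · intro s hs
      rw [interior_Icc] at hs
      rw [(hder s).deriv]
      have hs0 : 0 < s := hs.1
      have key : ⟪gradient g (W + s • V), V⟫_ℝ - ⟪gradient g W, V⟫_ℝ
          ≤ L * s ^ ν * ‖V‖ ^ (1 + ν) := by
        rw [← inner_sub_left]
        calc ⟪gradient g (W + s • V) - gradient g W, V⟫_ℝ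
            ≤ ‖gradient g (W + s • V) - gradient g W‖ * ‖V‖ := real_inner_le_norm _ _
          _ ≤ L * ‖(W + s • V) - W‖ ^ ν * ‖V‖ := by
              exact mul_le_mul_of_nonneg_right (hholder _ _) (norm_nonneg V)
          _ = L * s ^ ν * (‖V‖ ^ ν * ‖V‖) := by
              rw [add_sub_cancel_left, norm_smul, Real.norm_eq_abs, abs_of_pos hs0,
                Real.mul_rpow hs0.le (norm_nonneg V)]; ring
          _ = L * s ^ ν * ‖V‖ ^ (1 + ν) := by
              rcases eq_or_ne ‖V‖ 0 with h | h
              · rw [h, Real.zero_rpow (ne_of_gt hν0), Real.zero_rpow h1ν.ne']; ring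
              · rw [← Real.rpow_add_one h, add_comm]
      have heq : L / (1 + ν) * ((1 + ν) * s ^ ν) * ‖V‖ ^ (1 + ν)
          = L * s ^ ν * ‖V‖ ^ (1 + ν) := by
        field_simp
      linarith
  have h01 := hanti (Set.mem_Icc.mpr ⟨le_refl 0, zero_le_one⟩)
    (Set.mem_Icc.mpr ⟨zero_le_one, le_refl 1⟩) zero_le_one
  simp only [hφ, zero_smul, add_zero, zero_mul, Real.zero_rpow h1ν.ne', one_smul,
    Real.one_rpow, mul_zero, mul_one, sub_zero, one_mul] at h01
  linarith
end aux


/-- If `g` is differentiable and `L`-Hölder smooth with exponent `ν ∈ (0,1]`, `L > 0` with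
`L < 2L^ν`, and both `g⋆ = inf g` and `g⋆⋆ = sup g` are finite reals, then for every `W`,
`‖∇g(W)‖² ≤ 2L^{1+ν}(g⋆⋆ − g⋆)/(2L^ν − L) + (1−ν)L/((1+ν)(2L^ν − L))`. -/
theorem gradient_norm_sq_bound_of_holder_smooth {m n : ℕ}
    (g : EuclideanSpace ℝ (Fin m × Fin n) → ℝ)
    (L ν : ℝ) (hL : 0 < L) (hν : ν ∈ Set.Ioc (0 : ℝ) 1)
    (hL2 : L < 2 * L ^ ν)
    (hdiff : Differentiable ℝ g)
    (hholder : ∀ W₁ W₂ : EuclideanSpace ℝ (Fin m × Fin n),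
      ‖gradient g W₁ - gradient g W₂‖ ≤ L * ‖W₁ - W₂‖ ^ ν)
    (gStar gStarStar : ℝ)
    (hinf : IsGLB (Set.range g) gStar)
    (hsup : IsLUB (Set.range g) gStarStar) :
    ∀ W : EuclideanSpace ℝ (Fin m × Fin n),
      ‖gradient g W‖ ^ 2 ≤
        2 * L ^ (1 + ν) * (gStarStar - gStar) / (2 * L ^ ν - L) +
          (1 - ν) * L / ((1 + ν) * (2 * L ^ ν - L)) := by
  intro W
  obtain ⟨hν0, hν1⟩ := hν
  have h1ν : (0:ℝ) < 1 + ν := by linarith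
  have hA : 0 < L ^ ν := Real.rpow_pos_of_pos hL ν
  have hB : L ^ (1 + ν) = L * L ^ ν := by rw [Real.rpow_add hL, Real.rpow_one]
  have hBpos : 0 < L ^ (1 + ν) := Real.rpow_pos_of_pos hL _
  have h2AL : 0 < 2 * L ^ ν - L := by linarith
  set u := gradient g W with hu
  set G := ‖u‖ with hG
  have hGnn : 0 ≤ G := norm_nonneg u
  have hdes := descent g L ν hL ⟨hν0, hν1⟩ hdiff hholder W ((-L⁻¹) • u)
  have hin : ⟪u, (-L⁻¹) • u⟫_ℝ = -L⁻¹ * G ^ 2 := by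
    rw [real_inner_smul_right, real_inner_self_eq_norm_sq]
  have hnm : ‖(-L⁻¹) • u‖ = L⁻¹ * G := by
    rw [norm_smul, Real.norm_eq_abs, abs_neg, abs_of_pos (inv_pos.mpr hL)]
  have hnm2 : ‖(-L⁻¹) • u‖ ^ (1 + ν) = (L ^ (1 + ν))⁻¹ * G ^ (1 + ν) := by
    rw [hnm, Real.mul_rpow (inv_nonneg.mpr hL.le) hGnn, Real.inv_rpow hL.le]
  -- Young's inequality: G^{1+ν} ≤ (1+ν)/2 G² + (1-ν)/2
  have hyoung : G ^ (1 + ν) ≤ (1 + ν) / 2 * G ^ 2 + (1 - ν) / 2 := by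
    have h := Real.geom_mean_le_arith_mean2_weighted
      (by linarith : (0:ℝ) ≤ (1 + ν) / 2) (by linarith : (0:ℝ) ≤ (1 - ν) / 2)
      (by positivity : (0:ℝ) ≤ G ^ 2) zero_le_one (by ring)
    have heq : (G ^ 2) ^ ((1 + ν) / 2) = G ^ (1 + ν) := by
      rw [← Real.rpow_natCast G 2, ← Real.rpow_mul hGnn]
      congr 1
      push_cast
      ring
    rw [heq, Real.one_rpow, mul_one, mul_one] at h
    exact h
  have hlow : gStar ≤ g (W + (-L⁻¹) • u) := hinf.1 ⟨_, rfl⟩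
  have hup : g W ≤ gStarStar := hsup.1 ⟨_, rfl⟩
  rw [hin, hnm2] at hdes
  -- combine
  have hcoef : (0:ℝ) ≤ L / (1 + ν) * (L ^ (1 + ν))⁻¹ := by positivity
  have hcomb : gStar ≤ gStarStar + -L⁻¹ * G ^ 2 +
      L / (1 + ν) * ((L ^ (1 + ν))⁻¹ * ((1 + ν) / 2 * G ^ 2 + (1 - ν) / 2)) := by
    have : L / (1 + ν) * ((L ^ (1 + ν))⁻¹ * G ^ (1 + ν)) ≤
        L / (1 + ν) * ((L ^ (1 + ν))⁻¹ * ((1 + ν) / 2 * G ^ 2 + (1 - ν) / 2)) := by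
      apply mul_le_mul_of_nonneg_left _ (by positivity)
      exact mul_le_mul_of_nonneg_left hyoung (by positivity)
    calc gStar ≤ g (W + (-L⁻¹) • u) := hlow
      _ ≤ g W + -L⁻¹ * G ^ 2 + L / (1 + ν) * ((L ^ (1 + ν))⁻¹ * G ^ (1 + ν)) := by
          exact hdes
      _ ≤ gStarStar + -L⁻¹ * G ^ 2 +
          L / (1 + ν) * ((L ^ (1 + ν))⁻¹ * ((1 + ν) / 2 * G ^ 2 + (1 - ν) / 2)) := by
          linarith
  set S := G ^ 2 with hS
  set D := gStarStar - gStar with hD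
  set A := L ^ ν with hAdef
  have hfinal : S * ((1 + ν) * (2 * A - L)) ≤ 2 * (L * A) * (1 + ν) * D + (1 - ν) * L := by
    rw [hB] at hcomb
    rw [hD]
    have hc := hcomb
    field_simp at hc
    have hc' := hc
    nlinarith [hc']
  have hgoal : S ≤ (2 * (L * A) * (1 + ν) * D + (1 - ν) * L) / ((1 + ν) * (2 * A - L)) := by
    rw [le_div_iff₀ (by positivity)]
    linarith
  refine hgoal.trans_eq ?_
  rw [hB]
  field_simp
end

section
/- Example satisfying the heavy-tailed noise assumption: let f_i : ℝ^{m×n} → ℝ (i = 1,…,N) be differentiable with each f_i L_i-Hölder smooth with exponent ν ∈ (0,1] and L_i < 2L_i^ν, and suppose f_i^⋆ := inf f_i ∈ ℝ and f_i^{⋆⋆} := sup f_i ∈ ℝ for each i. Let f(W) = (1/N) Σ_{i=1}^N f_i(W), let ξ be uniformly distributed on {1,…,N}, and let 𝔭 ∈ (1,2]. Then for every W ∈ ℝ^{m×n}: (i) E_ξ[∇f_ξ(W)] = ∇f(W), and (ii) E_ξ[‖∇f_ξ(W) − ∇f(W)‖_F^𝔭] ≤ [ (1/N) Σ_{i=1}^N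 ( 2L_i^{1+ν}(f_i^{⋆⋆} − f_i^⋆)/(2L_i^ν − L_i) + (1−ν)L_i/((1+ν)(2L_i^ν − L_i)) ) ]^{𝔭/2}. -/
open MeasureTheory
open scoped InnerProductSpace BigOperators

section Aux

variable {E : Type*} [NormedAddCommGroup E] [InnerProductSpace ℝ E] [CompleteSpace E]

private lemma grad_continuous_aux (g : E → ℝ) (L ν : ℝ) (hν : 0 < ν)
    (hH : ∀ a b : E, ‖gradient g a - gradient g b‖ ≤ L * ‖a - b‖ ^ ν) :
    Continuous (fun z => gradient g z) := by
  rw [continuous_iff_continuousAt]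
  intro a
  rw [ContinuousAt, tendsto_iff_norm_sub_tendsto_zero]
  have hb : Continuous (fun z : E => L * ‖z - a‖ ^ ν) := by
    have h1 : Continuous (fun z : E => ‖z - a‖) := (continuous_id.sub continuous_const).norm
    have h2 : ContinuousOn (fun x : ℝ => x ^ ν) (Set.Ici 0) := by
      intro x hx
      exact (Real.continuousAt_rpow_const x ν (Or.inr hν.le)).continuousWithinAt
    exact continuous_const.mul (h2.comp_continuous h1 (fun z => norm_nonneg _))
  have hb0 : Filter.Tendsto (fun z : E => L * ‖z - a‖ ^ ν) (nhds a) (nhds 0) := by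
    have := hb.tendsto a
    simpa [Real.zero_rpow hν.ne'] using this
  exact squeeze_zero (fun z => norm_nonneg _) (fun z => hH z a) hb0

private lemma descent_lemma_aux (g : E → ℝ) (L ν : ℝ) (hν : 0 < ν)
    (hdiff : Differentiable ℝ g)
    (hH : ∀ a b : E, ‖gradient g a - gradient g b‖ ≤ L * ‖a - b‖ ^ ν)
    (x y : E) :
    g y ≤ g x + ⟪gradient g x, y - x⟫_ℝ + L * ‖y - x‖ ^ (1 + ν) / (1 + ν) := by
  set v := y - x with hv
  have hline : ∀ t : ℝ, HasDerivAt (fun t : ℝ => x + t • v) v t := by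
    intro t
    simpa using ((hasDerivAt_id t).smul_const v).const_add x
  have hderiv : ∀ t : ℝ, HasDerivAt (fun t : ℝ => g (x + t • v))
      ⟪gradient g (x + t • v), v⟫_ℝ t := by
    intro t
    have hg := ((hdiff (x + t • v)).hasGradientAt).hasFDerivAt
    have := hg.comp_hasDerivAt t (hline t)
    simpa [InnerProductSpace.toDual_apply_apply, Function.comp_def] using this
  have hgc : Continuous (fun z => gradient g z) := grad_continuous_aux g L ν hν hH
  have hcont : Continuous (fun t : ℝ => ⟪gradient g (x + t • v), v⟫_ℝ) := by
    exact (hgc.comp (continuous_const.add (continuous_id.smul continuous_const))).inner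
      continuous_const
  have hftc : g (x + (1:ℝ) • v) - g (x + (0:ℝ) • v)
      = ∫ t in (0:ℝ)..1, ⟪gradient g (x + t • v), v⟫_ℝ := by
    exact (intervalIntegral.integral_eq_sub_of_hasDerivAt
      (fun t _ => hderiv t) (hcont.intervalIntegrable 0 1)).symm
  have hbound : ∀ t ∈ Set.Icc (0:ℝ) 1,
      ⟪gradient g (x + t • v), v⟫_ℝ ≤ ⟪gradient g x, v⟫_ℝ + L * t ^ ν * ‖v‖ ^ (1 + ν) := by
    intro t ht
    have h1 : ⟪gradient g (x + t • v), v⟫_ℝ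
        = ⟪gradient g x, v⟫_ℝ + ⟪gradient g (x + t • v) - gradient g x, v⟫_ℝ := by
      rw [inner_sub_left]; ring
    rw [h1]
    gcongr
    calc ⟪gradient g (x + t • v) - gradient g x, v⟫_ℝ
        ≤ ‖gradient g (x + t • v) - gradient g x‖ * ‖v‖ := real_inner_le_norm _ _
      _ ≤ (L * ‖x + t • v - x‖ ^ ν) * ‖v‖ := by
          gcongr; exact hH _ _
      _ = L * t ^ ν * ‖v‖ ^ (1 + ν) := by
          have : ‖x + t • v - x‖ = t * ‖v‖ := by
            simp [norm_smul, abs_of_nonneg ht.1]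
          rw [this, Real.mul_rpow ht.1 (norm_nonneg v),
            Real.rpow_add' (norm_nonneg v) (by positivity), Real.rpow_one]
          ring
  have hintle : (∫ t in (0:ℝ)..1, ⟪gradient g (x + t • v), v⟫_ℝ)
      ≤ ∫ t in (0:ℝ)..1, (⟪gradient g x, v⟫_ℝ + L * t ^ ν * ‖v‖ ^ (1 + ν)) := by
    apply intervalIntegral.integral_mono_on (by norm_num)
      (hcont.intervalIntegrable 0 1)
    · apply IntervalIntegrable.add (intervalIntegrable_const)
      have := (intervalIntegral.intervalIntegrable_rpow' (a := 0) (b := 1) (r := ν)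
        (by linarith)).const_mul L
      exact this.mul_const _
    · intro t ht
      exact hbound t (by simpa using ht)
  have hrhs : (∫ t in (0:ℝ)..1, (⟪gradient g x, v⟫_ℝ + L * t ^ ν * ‖v‖ ^ (1 + ν)))
      = ⟪gradient g x, v⟫_ℝ + L * ‖v‖ ^ (1 + ν) / (1 + ν) := by
    rw [intervalIntegral.integral_add intervalIntegrable_const]
    · rw [intervalIntegral.integral_const]
      have h1 : (∫ t in (0:ℝ)..1, L * t ^ ν * ‖v‖ ^ (1 + ν))
          = (L * ‖v‖ ^ (1 + ν)) * ∫ t in (0:ℝ)..1, t ^ ν := by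
        rw [← intervalIntegral.integral_const_mul]
        congr 1; ext t; ring
      rw [h1, integral_rpow (Or.inl (by linarith))]
      rw [Real.one_rpow, Real.zero_rpow (by linarith)]
      simp; ring
    · have := (intervalIntegral.intervalIntegrable_rpow' (a := 0) (b := 1) (r := ν)
        (by linarith)).const_mul L
      exact this.mul_const _
  rw [hrhs] at hintle
  rw [← hftc] at hintle
  simp only [one_smul, zero_smul, add_zero] at hintle
  have hxy : x + v = y := by rw [hv]; abel
  rw [hxy] at hintle
  linarith

private lemma grad_sq_bound_aux (g : E → ℝ) (L ν fS fSS : ℝ) (hL : 0 < L) (hν : 0 < ν)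
    (hν1 : ν ≤ 1) (hL2 : L < 2 * L ^ ν)
    (hdiff : Differentiable ℝ g)
    (hH : ∀ a b : E, ‖gradient g a - gradient g b‖ ≤ L * ‖a - b‖ ^ ν)
    (hinf : IsGLB (Set.range g) fS) (hsup : IsLUB (Set.range g) fSS)
    (x : E) :
    ‖gradient g x‖ ^ 2 ≤ 2 * L ^ (1 + ν) * (fSS - fS) / (2 * L ^ ν - L) +
      (1 - ν) * L / ((1 + ν) * (2 * L ^ ν - L)) := by
  set G := gradient g x with hG
  set S := ‖G‖ ^ 2 with hS
  set A := L ^ ν with hA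
  have hApos : 0 < A := Real.rpow_pos_of_pos hL ν
  have hSnn : 0 ≤ S := sq_nonneg _
  set D := fSS - fS with hD
  have hDnn : 0 ≤ D := by
    have h1 : fS ≤ g x := hinf.1 ⟨x, rfl⟩
    have h2 : g x ≤ fSS := hsup.1 ⟨x, rfl⟩
    simp only [hD]; linarith
  have hdesc := descent_lemma_aux g L ν hν hdiff hH x (x - L⁻¹ • G)
  have hyx : x - L⁻¹ • G - x = -(L⁻¹ • G) := by abel
  rw [hyx] at hdesc
  have hinner : ⟪G, -(L⁻¹ • G)⟫_ℝ = -(L⁻¹ * S) := by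
    rw [inner_neg_right, real_inner_smul_right, real_inner_self_eq_norm_sq]
  have hnorm : ‖-(L⁻¹ • G)‖ = L⁻¹ * ‖G‖ := by
    rw [norm_neg, norm_smul, Real.norm_eq_abs, abs_of_pos (inv_pos.mpr hL)]
  have hnormpow : ‖-(L⁻¹ • G)‖ ^ (1 + ν) = L⁻¹ ^ (1 + ν) * ‖G‖ ^ (1 + ν) := by
    rw [hnorm, Real.mul_rpow (le_of_lt (inv_pos.mpr hL)) (norm_nonneg _)]
  have hLinv : L * L⁻¹ ^ (1 + ν) = A⁻¹ := by
    rw [Real.inv_rpow hL.le, Real.rpow_add hL, Real.rpow_one, hA]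
    rw [mul_inv, ← mul_assoc, mul_inv_cancel₀ hL.ne']
    ring
  have hyoung : ‖G‖ ^ (1 + ν) ≤ (1 + ν) / 2 * S + (1 - ν) / 2 := by
    have := Real.geom_mean_le_arith_mean2_weighted (w₁ := (1 + ν) / 2) (w₂ := (1 - ν) / 2)
      (p₁ := S) (p₂ := 1) (by linarith) (by linarith) hSnn zero_le_one (by ring)
    calc ‖G‖ ^ (1 + ν) = S ^ ((1 + ν) / 2) * 1 ^ ((1 - ν) / 2) := by
          rw [Real.one_rpow, mul_one, hS, ← Real.rpow_natCast ‖G‖ 2,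
            ← Real.rpow_mul (norm_nonneg _)]
          congr 1
          push_cast
          ring
      _ ≤ (1 + ν) / 2 * S + (1 - ν) / 2 * 1 := this
      _ = (1 + ν) / 2 * S + (1 - ν) / 2 := by ring
  have hfS : fS ≤ g (x - L⁻¹ • G) := hinf.1 ⟨_, rfl⟩
  have hfSS : g x ≤ fSS := hsup.1 ⟨x, rfl⟩
  have hmain : L⁻¹ * S ≤ D + A⁻¹ * ((1 + ν) / 2 * S + (1 - ν) / 2) / (1 + ν) := by
    have h1 : L * ‖-(L⁻¹ • G)‖ ^ (1 + ν) / (1 + ν)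
        ≤ A⁻¹ * ((1 + ν) / 2 * S + (1 - ν) / 2) / (1 + ν) := by
      rw [hnormpow, ← mul_assoc, hLinv]
      apply div_le_div_of_nonneg_right ?_ (by linarith)
      exact mul_le_mul_of_nonneg_left hyoung (le_of_lt (inv_pos.mpr hApos))
    rw [hinner] at hdesc
    linarith [hfS.trans hdesc, h1]
  have e1 : A⁻¹ * ((1 + ν) / 2 * S + (1 - ν) / 2) / (1 + ν)
      = S / (2 * A) + (1 - ν) / (2 * A * (1 + ν)) := by
    field_simp
  rw [e1] at hmain
  have hKpos : (0:ℝ) < 2 * A * L * (1 + ν) := by positivity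
  have h4 := mul_le_mul_of_nonneg_left hmain (le_of_lt hKpos)
  have hKl : 2 * A * L * (1 + ν) * (L⁻¹ * S) = 2 * A * (1 + ν) * S := by
    field_simp
  have hKr : 2 * A * L * (1 + ν) * (D + (S / (2 * A) + (1 - ν) / (2 * A * (1 + ν))))
      = 2 * A * L * (1 + ν) * D + L * (1 + ν) * S + L * (1 - ν) := by
    field_simp; ring
  rw [hKl, hKr] at h4
  have hc1 : (0:ℝ) < 2 * A - L := by linarith
  have hgoal2 : S ≤ (2 * L * A * D * (1 + ν) + (1 - ν) * L) / ((1 + ν) * (2 * A - L)) := by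
    rw [le_div_iff₀ (by positivity)]
    nlinarith [h4]
  have e2 : (2 * L * A * D * (1 + ν) + (1 - ν) * L) / ((1 + ν) * (2 * A - L))
      = 2 * L ^ (1 + ν) * D / (2 * A - L) + (1 - ν) * L / ((1 + ν) * (2 * A - L)) := by
    rw [Real.rpow_add hL, Real.rpow_one, ← hA]
    field_simp
  rw [e2] at hgoal2
  exact hgoal2

end Aux

/-- **Example satisfying the heavy-tailed noise assumption.** For `f_i` differentiable,
`L_i`-Hölder smooth with exponent `ν ∈ (0,1]`, `L_i < 2L_i^ν`, with finite infimum `f_i⋆` and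
supremum `f_i⋆⋆`, empirical risk `f(W) = (1/N)∑ f_i(W)`, and `ξ` uniformly distributed on
`{1,…,N}`: (i) `E_ξ[∇f_ξ(W)] = ∇f(W)`, and (ii) the `𝔭`-variance bound holds. -/
theorem uniform_stochastic_gradient_unbiased_and_pvariance_bound
    {m n N : ℕ} [NeZero N]
    (fi : Fin N → EuclideanSpace ℝ (Fin m × Fin n) → ℝ)
    (Li : Fin N → ℝ) (ν 𝔭 : ℝ)
    (hLi : ∀ i, 0 < Li i)
    (hν : ν ∈ Set.Ioc (0 : ℝ) 1) (h𝔭 : 𝔭 ∈ Set.Ioc (1 : ℝ) 2)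
    (hLi2 : ∀ i, Li i < 2 * Li i ^ ν)
    (hdiff : ∀ i, Differentiable ℝ (fi i))
    (hholder : ∀ i, ∀ W₁ W₂ : EuclideanSpace ℝ (Fin m × Fin n),
      ‖gradient (fi i) W₁ - gradient (fi i) W₂‖ ≤ Li i * ‖W₁ - W₂‖ ^ ν)
    (fStar fStarStar : Fin N → ℝ)
    (hinf : ∀ i, IsGLB (Set.range (fi i)) (fStar i))
    (hsup : ∀ i, IsLUB (Set.range (fi i)) (fStarStar i))
    (f : EuclideanSpace ℝ (Fin m × Fin n) → ℝ)
    (hf : ∀ W, f W = (N : ℝ)⁻¹ * ∑ i, fi i W) :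
    ∀ W : EuclideanSpace ℝ (Fin m × Fin n),
      (∫ i, gradient (fi i) W ∂((PMF.uniformOfFintype (Fin N)).toMeasure)) = gradient f W ∧
      (∫ i, ‖gradient (fi i) W - gradient f W‖ ^ 𝔭
          ∂((PMF.uniformOfFintype (Fin N)).toMeasure)) ≤
        ((N : ℝ)⁻¹ * ∑ i,
          (2 * Li i ^ (1 + ν) * (fStarStar i - fStar i) / (2 * Li i ^ ν - Li i) +
            (1 - ν) * Li i / ((1 + ν) * (2 * Li i ^ ν - Li i)))) ^ (𝔭 / 2) := by
  intro W
  obtain ⟨hν0, hν1⟩ := hν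
  obtain ⟨h𝔭1, h𝔭2⟩ := h𝔭
  have hNpos : 0 < (N : ℝ) := by
    have := Nat.pos_of_ne_zero (NeZero.ne N)
    exact_mod_cast this
  set μ := (PMF.uniformOfFintype (Fin N)).toMeasure with hμ
  have hμs : ∀ i : Fin N, (μ {i}).toReal = (N : ℝ)⁻¹ := by
    intro i
    rw [hμ, PMF.toMeasure_apply_singleton _ _ (measurableSet_singleton i),
      PMF.uniformOfFintype_apply]
    simp [ENNReal.toReal_inv]
  -- the gradients
  set g : Fin N → EuclideanSpace ℝ (Fin m × Fin n) := fun i => gradient (fi i) W with hg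
  -- gradient of f
  have hgradf : gradient f W = (N : ℝ)⁻¹ • ∑ i, g i := by
    have hfe : f = fun W => (N : ℝ)⁻¹ * ∑ i, fi i W := funext hf
    have hd : ∀ i : Fin N, HasFDerivAt (fi i)
        (InnerProductSpace.toDual ℝ _ (g i)) W := fun i =>
      ((hdiff i W).hasGradientAt).hasFDerivAt
    have hsum : HasFDerivAt (fun W => ∑ i, fi i W)
        (∑ i, InnerProductSpace.toDual ℝ _ (g i)) W :=
      HasFDerivAt.fun_sum (fun i _ => hd i)
    have hmul := hsum.const_mul ((N : ℝ)⁻¹)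
    have hFf : HasFDerivAt f ((N : ℝ)⁻¹ • ∑ i, InnerProductSpace.toDual ℝ _ (g i)) W := by
      rw [hfe]; exact hmul
    have hGf := hFf.hasGradientAt
    have := hGf.gradient
    rw [this, _root_.map_smul, _root_.map_sum]
    congr 1
    apply Finset.sum_congr rfl
    intro i _
    exact (InnerProductSpace.toDual ℝ _).symm_apply_apply (g i)
  -- part (i)
  have hint1 : (∫ i, g i ∂μ) = (N : ℝ)⁻¹ • ∑ i, g i := by
    rw [integral_fintype (Integrable.of_finite)]
    simp only [measureReal_def, hμs]
    rw [Finset.smul_sum]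
  constructor
  · rw [hint1, hgradf]
  -- part (ii)
  set σ : Fin N → ℝ := fun i =>
    2 * Li i ^ (1 + ν) * (fStarStar i - fStar i) / (2 * Li i ^ ν - Li i) +
      (1 - ν) * Li i / ((1 + ν) * (2 * Li i ^ ν - Li i)) with hσ
  set gbar := gradient f W with hgbar
  set a : Fin N → ℝ := fun i => ‖g i - gbar‖ with ha
  have hann : ∀ i, 0 ≤ a i := fun i => norm_nonneg _
  -- integral to sum
  have hint2 : (∫ i, ‖g i - gbar‖ ^ 𝔭 ∂μ) = ∑ i, (N : ℝ)⁻¹ * a i ^ 𝔭 := by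
    rw [integral_fintype (Integrable.of_finite)]
    simp only [measureReal_def, hμs, smul_eq_mul, ha]
  rw [hint2]
  -- power mean inequality
  have hw1 : ∑ _i : Fin N, (N : ℝ)⁻¹ = 1 := by
    rw [Finset.sum_const, Finset.card_univ, Fintype.card_fin, nsmul_eq_mul,
      mul_inv_cancel₀ hNpos.ne']
  have hp1 : (1 : ℝ) ≤ 2 / 𝔭 := by
    rw [le_div_iff₀ (by linarith)]; linarith
  have hpm := Real.arith_mean_le_rpow_mean Finset.univ (fun _ => (N : ℝ)⁻¹)
    (fun i => a i ^ 𝔭) (fun i _ => by positivity) hw1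
    (fun i _ => by positivity) hp1
  have hz : ∀ i : Fin N, (a i ^ 𝔭) ^ (2 / 𝔭) = a i ^ (2 : ℕ) := by
    intro i
    rw [← Real.rpow_natCast (a i) 2, ← Real.rpow_mul (hann i)]
    congr 1
    push_cast
    field_simp
  have h1p : (1 : ℝ) / (2 / 𝔭) = 𝔭 / 2 := by
    field_simp
  simp only [hz, h1p] at hpm
  -- variance identity / bound
  have hsumg : ∑ i, (N : ℝ)⁻¹ • g i = gbar := by
    rw [hgradf, Finset.smul_sum]
  have hinnersum : ∑ i, (N : ℝ)⁻¹ * ⟪g i, gbar⟫_ℝ = ‖gbar‖ ^ (2 : ℕ) := by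
    have : ∑ i, (N : ℝ)⁻¹ * ⟪g i, gbar⟫_ℝ = ⟪∑ i, (N : ℝ)⁻¹ • g i, gbar⟫_ℝ := by
      rw [sum_inner]
      apply Finset.sum_congr rfl
      intro i _
      rw [real_inner_smul_left]
    rw [this, hsumg, real_inner_self_eq_norm_sq]
  have hvar : ∑ i, (N : ℝ)⁻¹ * a i ^ (2 : ℕ)
      = ∑ i, (N : ℝ)⁻¹ * ‖g i‖ ^ (2 : ℕ) - ‖gbar‖ ^ (2 : ℕ) := by
    have hexp : ∀ i : Fin N, (N : ℝ)⁻¹ * a i ^ (2 : ℕ)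
        = (N : ℝ)⁻¹ * ‖g i‖ ^ (2 : ℕ) - 2 * ((N : ℝ)⁻¹ * ⟪g i, gbar⟫_ℝ)
          + (N : ℝ)⁻¹ * ‖gbar‖ ^ (2 : ℕ) := by
      intro i
      rw [ha]
      simp only
      rw [norm_sub_sq_real]
      ring
    rw [Finset.sum_congr rfl (fun i _ => hexp i)]
    rw [Finset.sum_add_distrib, Finset.sum_sub_distrib, ← Finset.mul_sum, ← Finset.mul_sum,
      hinnersum, ← Finset.sum_mul, hw1]
    ring
  have hgb : ∀ i : Fin N, ‖g i‖ ^ (2 : ℕ) ≤ σ i := fun i =>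
    grad_sq_bound_aux (fi i) (Li i) ν (fStar i) (fStarStar i) (hLi i) hν0 hν1 (hLi2 i)
      (hdiff i) (hholder i) (hinf i) (hsup i) W
  have hstep : ∑ i, (N : ℝ)⁻¹ * a i ^ (2 : ℕ) ≤ (N : ℝ)⁻¹ * ∑ i, σ i := by
    rw [hvar, Finset.mul_sum]
    have h1 : ∑ i, (N : ℝ)⁻¹ * ‖g i‖ ^ (2 : ℕ) ≤ ∑ i, (N : ℝ)⁻¹ * σ i := by
      apply Finset.sum_le_sum
      intro i _
      exact mul_le_mul_of_nonneg_left (hgb i) (by positivity)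
    have h2 : (0 : ℝ) ≤ ‖gbar‖ ^ (2 : ℕ) := by positivity
    linarith
  calc ∑ i, (N : ℝ)⁻¹ * a i ^ 𝔭
      ≤ (∑ i, (N : ℝ)⁻¹ * a i ^ (2 : ℕ)) ^ (𝔭 / 2) := hpm
    _ ≤ ((N : ℝ)⁻¹ * ∑ i, σ i) ^ (𝔭 / 2) := by
        apply Real.rpow_le_rpow ?_ hstep (by positivity)
        apply Finset.sum_nonneg
        intro i _
        positivity
    _ = _ := rfl
end

section
/- Expansion inequality for the 𝔭-th power of the Frobenius norm: for every 𝔭 ∈ (1,2] and all W, W₁ ∈ ℝ^{m×n} with W ≠ 0, it holds that ‖W + W₁‖_F^𝔭 ≤ ‖W‖_F^𝔭 + 2^{2−𝔭} ‖W₁‖_F^𝔭 + (𝔭 / ‖W‖_F^{2−𝔭}) (W • W₁). -/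
open scoped InnerProductSpace BigOperators
open Real

lemma pnorm_rpow_tangent {q z y : ℝ} (hq0 : 0 ≤ q) (hq1 : q ≤ 1) (hy : 0 < y) (hz : 0 ≤ z) :
    z ^ q ≤ y ^ q + q * y ^ (q - 1) * (z - y) := by
  have hs : (-1:ℝ) ≤ z / y - 1 := by
    have : 0 ≤ z / y := div_nonneg hz hy.le
    linarith
  have h := rpow_one_add_le_one_add_mul_self hs hq0 hq1
  rw [show (1:ℝ) + (z/y-1) = z/y by ring] at h
  have hyq : (0:ℝ) < y ^ q := rpow_pos_of_pos hy q
  have h2 := mul_le_mul_of_nonneg_left h hyq.le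
  rw [Real.div_rpow hz hy.le] at h2
  rw [mul_div_cancel₀ _ (ne_of_gt hyq)] at h2
  calc z ^ q ≤ y ^ q * (1 + q * (z/y - 1)) := h2
    _ = y ^ q + q * (y ^ q / y) * (z - y) := by field_simp
    _ = y ^ q + q * y ^ (q-1) * (z - y) := by rw [← Real.rpow_sub_one hy.ne']

lemma pnorm_log_aux {q : ℝ} (h0 : 0 < q) (h1 : q < 1) :
    q * Real.log q + (1 - q) * Real.log (1 + q) ≤ 0 := by
  have hl1 : Real.log q ≤ q - 1 := Real.log_le_sub_one_of_pos h0
  have hl2 : Real.log (1 + q) ≤ (1 + q) - 1 := Real.log_le_sub_one_of_pos (by linarith)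
  nlinarith [mul_le_mul_of_nonneg_left hl1 h0.le,
    mul_le_mul_of_nonneg_left hl2 (by linarith : (0:ℝ) ≤ 1 - q)]

lemma pnorm_pow_sub_lin {p u : ℝ} (hp1 : 1 < p) (hp2 : p ≤ 2) (hu0 : 0 ≤ u) :
    u ^ (p - 1) ≤ u + (2 - p) / p := by
  rcases eq_or_lt_of_le hp2 with rfl | hp2'
  · rw [show (2:ℝ) - 1 = 1 by norm_num, Real.rpow_one]
    norm_num
  set c : ℝ := (p - 1) ^ ((1:ℝ) / (2 - p)) with hc
  have hq0 : 0 < p - 1 := by linarith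
  have hcpos : 0 < c := rpow_pos_of_pos hq0 _
  have hamgm := Real.geom_mean_le_arith_mean2_weighted
    (by linarith : (0:ℝ) ≤ p - 1) (by linarith : (0:ℝ) ≤ 2 - p)
    (div_nonneg hu0 hcpos.le) zero_le_one (by ring)
  rw [Real.one_rpow, mul_one, mul_one] at hamgm
  have hcp : (0:ℝ) < c ^ (p - 1) := rpow_pos_of_pos hcpos _
  have h2 := mul_le_mul_of_nonneg_left hamgm hcp.le
  rw [Real.div_rpow hu0 hcpos.le, mul_div_cancel₀ _ (ne_of_gt hcp)] at h2
  have hcp2 : c ^ (p - 2) = (p - 1)⁻¹ := by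
    rw [hc, ← Real.rpow_mul hq0.le,
      show (1:ℝ) / (2 - p) * (p - 2) = -1 by
        rw [div_mul_eq_mul_div, one_mul, div_eq_iff (show (2:ℝ)-p ≠ 0 by linarith)]; ring,
      Real.rpow_neg_one]
  have hkey : c ^ (p - 1) * ((p - 1) * (u / c)) = u := by
    rw [show p - 1 = p - 2 + 1 by ring, Real.rpow_add_one hcpos.ne', hcp2]
    field_simp
    ring
  have hppos : (0:ℝ) < p := by linarith
  have hcle : c ^ (p - 1) ≤ p⁻¹ := by
    rw [← Real.log_le_log_iff hcp (by positivity), Real.log_rpow hcpos, hc,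
      Real.log_rpow hq0, Real.log_inv]
    have hlog := pnorm_log_aux hq0 (by linarith : p - 1 < 1)
    rw [show (1:ℝ) + (p - 1) = p by ring] at hlog
    rw [mul_comm (p-1), mul_assoc, div_mul_eq_mul_div, one_mul,
      div_le_iff₀ (by linarith : (0:ℝ) < 2 - p)]
    nlinarith [hlog]
  calc u ^ (p-1) ≤ c ^ (p-1) * ((p-1) * (u/c) + (2-p)) := h2
    _ = u + (2-p) * c ^ (p-1) := by rw [mul_add, hkey]; ring
    _ ≤ u + (2-p) * p⁻¹ := by nlinarith [hcle]
    _ = u + (2-p)/p := by ring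

lemma pnorm_odd_pow_ineq {p s : ℝ} (hp1 : 1 < p) (hp2 : p ≤ 2) (hs0 : 0 ≤ s) (hs1 : s ≤ 1) :
    (1 + s) ^ p ≤ (1 - s) ^ p + 2 * p * s := by
  set f : ℝ → ℝ := fun x => (1 - x) ^ p + 2 * p * x - (1 + x) ^ p with hf
  have hderiv : ∀ x : ℝ, HasDerivAt f
      (p * (1 - x) ^ (p - 1) * (-1) + 2 * p - p * (1 + x) ^ (p - 1)) x := by
    intro x
    have h1 : HasDerivAt (fun x : ℝ => (1 - x) ^ p) (p * (1 - x) ^ (p - 1) * (-1)) x := by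
      have := (Real.hasDerivAt_rpow_const (x := 1 - x) (p := p) (Or.inr hp1.le)).comp x
        (((hasDerivAt_id x).const_sub 1))
      simpa [Function.comp_def] using this
    have h2 : HasDerivAt (fun x : ℝ => (1 + x) ^ p) (p * (1 + x) ^ (p - 1) * 1) x := by
      have := (Real.hasDerivAt_rpow_const (x := 1 + x) (p := p) (Or.inr hp1.le)).comp x
        ((hasDerivAt_id x).const_add 1)
      simpa [Function.comp_def] using this
    simpa [hf, Pi.add_def, Pi.sub_def] using (h1.add ((hasDerivAt_id x).const_mul (2 * p))).sub h2
  have hmono : MonotoneOn f (Set.Icc 0 1) := by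
    apply monotoneOn_of_deriv_nonneg (convex_Icc 0 1)
    · exact fun x _ => (hderiv x).continuousAt.continuousWithinAt
    · intro x hx
      exact (hderiv x).differentiableAt.differentiableWithinAt
    · intro x hx
      rw [interior_Icc] at hx
      rw [(hderiv x).deriv]
      have hq0 : (0:ℝ) ≤ p - 1 := by linarith
      have hq1 : p - 1 ≤ 1 := by linarith
      have b1 : (1 + x) ^ (p - 1) ≤ 1 + (p - 1) * x := by
        have := rpow_one_add_le_one_add_mul_self (s := x) (by linarith [hx.1]) hq0 hq1
        linarith
      have b2 : (1 - x) ^ (p - 1) ≤ 1 + (p - 1) * (-x) := by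
        have := rpow_one_add_le_one_add_mul_self (s := -x) (by linarith [hx.2]) hq0 hq1
        rw [show (1:ℝ) + -x = 1 - x by ring] at this
        linarith
      nlinarith
  have h0 : f 0 ≤ f s := hmono (Set.mem_Icc.mpr ⟨le_refl 0, zero_le_one⟩)
    (Set.mem_Icc.mpr ⟨hs0, hs1⟩) hs0
  have hf0 : f 0 = 0 := by simp [hf]
  have := hf0 ▸ h0
  simp only [hf] at this
  linarith

lemma pnorm_core2 {p a b : ℝ} (hp1 : 1 < p) (hp2 : p ≤ 2) (ha : 0 < a) (hab : 2*a ≤ b) :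
    (b - a) ^ p + p * a ^ (p-1) * b ≤ a ^ p + 2 ^ (2-p) * b ^ p := by
  have hb : 0 < b := by linarith
  set β := b/2 with hβ
  have hβ0 : 0 < β := by rw [hβ]; positivity
  set s := (b - 2*a)/b with hs
  have hs0 : 0 ≤ s := div_nonneg (by linarith) hb.le
  have hs1 : s ≤ 1 := by rw [hs, div_le_one hb]; linarith
  have h1s : 0 ≤ 1 - s := by linarith
  have h1s' : 0 ≤ 1 + s := by linarith
  have e1 : b - a = β * (1 + s) := by rw [hβ, hs]; field_simp [hb.ne']; ring
  have e2 : a = β * (1 - s) := by rw [hβ, hs]; field_simp [hb.ne']; ring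
  have hb2 : b = 2*β := by rw [hβ]; ring
  have r1 : (b - a)^p = β^p * (1+s)^p := by rw [e1, Real.mul_rpow hβ0.le h1s']
  have r2 : a^p = β^p * (1-s)^p := by rw [e2, Real.mul_rpow hβ0.le h1s]
  have r3 : a^(p-1) = β^(p-1) * (1-s)^(p-1) := by rw [e2, Real.mul_rpow hβ0.le h1s]
  have hββ : β^p = β^(p-1)*β := by
    have h := Real.rpow_add_one hβ0.ne' (p-1)
    rw [show p-1+1 = p by ring] at h
    exact h
  have r4 : (2:ℝ)^(2-p) * b^p = 4 * β^p := by
    rw [hb2, Real.mul_rpow (by norm_num) hβ0.le, ← mul_assoc, ← Real.rpow_add two_pos,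
      show (2:ℝ)-p+p = ((2:ℕ):ℝ) by push_cast; ring, Real.rpow_natCast]
    norm_num
  have r5 : p * a^(p-1) * b = β^p * (2*p*(1-s)^(p-1)) := by
    rw [r3, hb2, hββ]; ring
  have hu := pnorm_pow_sub_lin hp1 hp2 h1s
  have ho := pnorm_odd_pow_ineq hp1 hp2 hs0 hs1
  have hp0 : 0 < p := by linarith
  have hinner : (1+s)^p + 2*p*(1-s)^(p-1) ≤ (1-s)^p + 4 := by
    have h2p : (0:ℝ) ≤ 2*p := by linarith
    have hmul := mul_le_mul_of_nonneg_left hu h2p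
    have hpe : 2*p*((1-s) + (2-p)/p) = 2*p*(1-s) + 2*(2-p) := by
      field_simp
    rw [hpe] at hmul
    linarith
  calc (b-a)^p + p*a^(p-1)*b = β^p * ((1+s)^p + 2*p*(1-s)^(p-1)) := by rw [r1, r5]; ring
    _ ≤ β^p * ((1-s)^p + 4) := by
        apply mul_le_mul_of_nonneg_left hinner (by positivity)
    _ = a^p + 2^(2-p)*b^p := by rw [r2, r4]; ring

lemma pnorm_mul_self_rpow {x : ℝ} (hx : 0 ≤ x) (r : ℝ) : (x*x) ^ r = x ^ (2*r) := by
  rw [show x*x = x^(2:ℕ) by ring, ← Real.rpow_natCast x 2, ← Real.rpow_mul hx]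
  norm_num

lemma pnorm_key {p a b t : ℝ} (hp1 : 1 < p) (hp2 : p ≤ 2) (ha : 0 < a) (hb : 0 ≤ b)
    (ht : |t| ≤ a*b) :
    (a*a + 2*t + b*b) ^ (p/2) ≤ a^p + 2^(2-p)*b^p + p * a^(p-2) * t := by
  obtain ⟨htl, htr⟩ := abs_le.mp ht
  have hz : 0 ≤ a*a + 2*t + b*b := by nlinarith [sq_nonneg (a-b)]
  have hq0 : (0:ℝ) ≤ p/2 := by linarith
  have hq1 : p/2 ≤ 1 := by linarith
  rcases le_or_gt b (2*a) with hcase | hcase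
  · have htan := pnorm_rpow_tangent hq0 hq1 (mul_pos ha ha) hz
    rw [pnorm_mul_self_rpow ha.le (p/2), pnorm_mul_self_rpow ha.le (p/2-1),
      show 2*(p/2) = p by ring, show 2*(p/2-1) = p-2 by ring] at htan
    have hbb : (p/2)*(a^(p-2)*(b*b)) ≤ 2^(2-p)*b^p := by
      rcases eq_or_lt_of_le hb with rfl | hb0
      · simp [Real.zero_rpow (show p ≠ 0 by linarith)]
      · have hbp : b*b = b^(2-p) * b^p := by
          rw [← Real.rpow_add hb0, show (2:ℝ)-p+p = ((2:ℕ):ℝ) by push_cast; ring,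
            Real.rpow_natCast]
          ring
        have h2a : b^(2-p) ≤ 2^(2-p) * a^(2-p) := by
          calc b^(2-p) ≤ (2*a)^(2-p) := Real.rpow_le_rpow hb hcase (by linarith)
            _ = 2^(2-p)*a^(2-p) := Real.mul_rpow (by norm_num) ha.le
        have haa : a^(p-2) * a^(2-p) = 1 := by
          rw [← Real.rpow_add ha]; norm_num
        have hap2 : (0:ℝ) ≤ a^(p-2) := (rpow_pos_of_pos ha _).le
        have hbp0 : (0:ℝ) ≤ b^p := Real.rpow_nonneg hb p
        have h2p0 : (0:ℝ) ≤ (2:ℝ)^(2-p) := Real.rpow_nonneg (by norm_num) _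
        have hAB : a^(p-2) * b^(2-p) ≤ 2^(2-p) := by
          calc a^(p-2) * b^(2-p) ≤ a^(p-2) * (2^(2-p) * a^(2-p)) :=
                mul_le_mul_of_nonneg_left h2a hap2
            _ = 2^(2-p) * (a^(p-2) * a^(2-p)) := by ring
            _ = 2^(2-p) := by rw [haa]; ring
        have hABC := mul_le_mul_of_nonneg_right hAB hbp0
        have hABC0 : (0:ℝ) ≤ a^(p-2) * b^(2-p) * b^p := by positivity
        rw [hbp]
        nlinarith [hABC, hABC0]
    calc (a*a + 2*t + b*b)^(p/2)
        ≤ a^p + (p/2)*a^(p-2)*((a*a + 2*t + b*b) - a*a) := htan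
      _ = a^p + p*a^(p-2)*t + (p/2)*(a^(p-2)*(b*b)) := by ring
      _ ≤ a^p + 2^(2-p)*b^p + p*a^(p-2)*t := by linarith
  · have hba : 0 < b - a := by linarith
    have htan := pnorm_rpow_tangent hq0 hq1 (mul_pos hba hba) hz
    rw [pnorm_mul_self_rpow hba.le (p/2), pnorm_mul_self_rpow hba.le (p/2-1),
      show 2*(p/2) = p by ring, show 2*(p/2-1) = p-2 by ring] at htan
    have hmon : (b-a)^(p-2) ≤ a^(p-2) :=
      Real.rpow_le_rpow_of_nonpos ha (by linarith) (by linarith)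
    have hcore := pnorm_core2 hp1 hp2 ha hcase.le
    have ha1 : a^(p-1) = a^(p-2) * a := by
      rw [show p-1 = (p-2)+1 by ring, Real.rpow_add_one ha.ne']
    have hX : (b-a)^(p-2)*(t+a*b) ≤ a^(p-2)*(t+a*b) :=
      mul_le_mul_of_nonneg_right hmon (by linarith)
    have hp0 : (0:ℝ) ≤ p := by linarith
    calc (a*a + 2*t + b*b)^(p/2)
        ≤ (b-a)^p + (p/2)*(b-a)^(p-2)*((a*a + 2*t + b*b) - (b-a)*(b-a)) := htan
      _ = (b-a)^p + p*((b-a)^(p-2)*(t+a*b)) := by ring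
      _ ≤ (b-a)^p + p*(a^(p-2)*(t+a*b)) := by nlinarith [hX]
      _ = ((b-a)^p + p*a^(p-1)*b) + p*a^(p-2)*t := by rw [ha1]; ring
      _ ≤ (a^p + 2^(2-p)*b^p) + p*a^(p-2)*t := by linarith
      _ = a^p + 2^(2-p)*b^p + p*a^(p-2)*t := by ring

/-- **Expansion inequality for the `𝔭`-th power of the Frobenius norm.** For `𝔭 ∈ (1,2]` and
`W ≠ 0`: `‖W + W₁‖^𝔭 ≤ ‖W‖^𝔭 + 2^{2−𝔭}‖W₁‖^𝔭 + (𝔭/‖W‖^{2−𝔭})⟪W, W₁⟫`. -/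
theorem pow_p_norm_expansion_inequality {m n : ℕ}
    (𝔭 : ℝ) (h𝔭 : 𝔭 ∈ Set.Ioc (1 : ℝ) 2) :
    ∀ W W₁ : EuclideanSpace ℝ (Fin m × Fin n), W ≠ 0 →
      ‖W + W₁‖ ^ 𝔭 ≤ ‖W‖ ^ 𝔭 + 2 ^ (2 - 𝔭) * ‖W₁‖ ^ 𝔭 +
        (𝔭 / ‖W‖ ^ (2 - 𝔭)) * ⟪W, W₁⟫_ℝ := by
  intro W W₁ hW
  have ha : 0 < ‖W‖ := norm_pos_iff.mpr hW
  have hb : (0:ℝ) ≤ ‖W₁‖ := norm_nonneg _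
  have hcs : |⟪W, W₁⟫_ℝ| ≤ ‖W‖ * ‖W₁‖ := abs_real_inner_le_norm W W₁
  have hk := pnorm_key h𝔭.1 h𝔭.2 ha hb hcs
  have hnorm : ‖W + W₁‖*‖W + W₁‖ = ‖W‖*‖W‖ + 2*⟪W,W₁⟫_ℝ + ‖W₁‖*‖W₁‖ := by
    have h := norm_add_sq_real W W₁
    simpa [pow_two] using h
  calc ‖W + W₁‖ ^ 𝔭 = (‖W + W₁‖*‖W + W₁‖)^(𝔭/2) := by
        rw [pnorm_mul_self_rpow (norm_nonneg _) (𝔭/2), show 2*(𝔭/2) = 𝔭 by ring]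
    _ = (‖W‖*‖W‖ + 2*⟪W,W₁⟫_ℝ + ‖W₁‖*‖W₁‖)^(𝔭/2) := by rw [hnorm]
    _ ≤ ‖W‖^𝔭 + 2^(2-𝔭)*‖W₁‖^𝔭 + 𝔭 * ‖W‖^(𝔭-2) * ⟪W,W₁⟫_ℝ := hk
    _ = ‖W‖ ^ 𝔭 + 2 ^ (2 - 𝔭) * ‖W₁‖ ^ 𝔭 + (𝔭 / ‖W‖ ^ (2 - 𝔭)) * ⟪W, W₁⟫_ℝ := by
        rw [show 𝔭-2 = -(2-𝔭) by ring, Real.rpow_neg ha.le, div_eq_mul_inv]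
end

section
/- Lower convergence bound for Muon without momentum: let (W_t) be generated by Muon with β = 0 under Assumptions (A1) and (A2). Suppose there exists t₂ ∈ ℕ such that for all t ≥ t₂ the convexity inequality f(W_{t+1}) ≥ f(W_t) + ∇f(W_t) • (W_{t+1} − W_t) holds almost surely (Assumption (A3)), and that C₄ := (1/√n) inf{E[f(W_{t₂})] − E[f(W_t)] : t ≥ t₂} ≥ 0 (Assumption (A4)). Then for all T ∈ ℕ: (1/Σ_{t=t₂}^{T+t₂−1} η_t) Σ_{t=t₂}^{T+t₂−1} η_t E[‖∇f(W_t)‖_F] ≥ C₄ / Σ_{t=t₂}^{T+t₂−1} η_t. -/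
open MeasureTheory ProbabilityTheory Real Filter Matrix
open scoped InnerProductSpace BigOperators

/-- The `m × n` matrix corresponding to an element of `EuclideanSpace ℝ (Fin m × Fin n)`
(so that the Euclidean norm is the Frobenius norm). -/
noncomputable def toMat {m n : ℕ} (W : EuclideanSpace ℝ (Fin m × Fin n)) :
    Matrix (Fin m) (Fin n) ℝ := Matrix.of fun i j => W (i, j)

/-- Membership in the Stiefel manifold `St(n,m) = {O ∈ ℝ^{m×n} : Oᵀ O = I_n}`. -/
def IsStiefel {m n : ℕ} (A : EuclideanSpace ℝ (Fin m × Fin n)) : Prop :=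
  (toMat A)ᵀ * toMat A = 1

lemma stiefel_norm {m n : ℕ} {A : EuclideanSpace ℝ (Fin m × Fin n)} (h : IsStiefel A) :
    ‖A‖ = Real.sqrt n := by
  rw [EuclideanSpace.norm_eq]
  congr 1
  have key : ∀ j : Fin n, ∑ i : Fin m, A (i, j) * A (i, j) = 1 := by
    intro j
    have := congrFun (congrFun h j) j
    simpa [Matrix.mul_apply, toMat, Matrix.one_apply] using this
  calc ∑ p : Fin m × Fin n, ‖A p‖ ^ 2
      = ∑ i : Fin m, ∑ j : Fin n, A (i, j) * A (i, j) := by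
        rw [Fintype.sum_prod_type]
        simp [sq, Real.norm_eq_abs, abs_mul_abs_self]
    _ = ∑ j : Fin n, ∑ i : Fin m, A (i, j) * A (i, j) := by rw [Finset.sum_comm]
    _ = n := by simp [key]


/-- **Lower convergence bound for Muon without momentum** (Theorem 4.3). Under the local
convexity assumption (A3) along the iterates from time `t₂` on, and (A4) `C₄ ≥ 0` being a lower
bound of `(1/√n)(E[f(W_{t₂})] − E[f(W_t)])` for `t ≥ t₂`, the weighted Cesàro mean of
`E[‖∇f(W_t)‖_F]` is at least `C₄ / Σ_{t=t₂}^{T+t₂−1} η_t`. -/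
theorem muon_no_momentum_lower_convergence_bound
    {m n N : ℕ} (hN : 0 < N) (hnm : n ≤ m)
    {Ω : Type*} {mΩ : MeasurableSpace Ω} (μ : Measure Ω) [IsProbabilityMeasure μ]
    (ℱ : Filtration ℕ mΩ)
    (fi : Fin N → EuclideanSpace ℝ (Fin m × Fin n) → ℝ)
    (Li : Fin N → ℝ) (ν 𝔭 σ : ℝ)
    (hLi : ∀ i, 0 < Li i)
    (hν : ν ∈ Set.Ioc (0 : ℝ) 1) (h𝔭 : 𝔭 ∈ Set.Ioc (1 : ℝ) 2) (hσ : 0 ≤ σ)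
    -- (A1): Hölder smoothness and finite infima
    (hdiff : ∀ i, Differentiable ℝ (fi i))
    (hholder : ∀ i, ∀ W₁ W₂ : EuclideanSpace ℝ (Fin m × Fin n),
      ‖gradient (fi i) W₁ - gradient (fi i) W₂‖ ≤ Li i * ‖W₁ - W₂‖ ^ ν)
    (hbdd : ∀ i, BddBelow (Set.range (fi i)))
    -- empirical risk
    (f : EuclideanSpace ℝ (Fin m × Fin n) → ℝ)
    (hf : ∀ W, f W = (N : ℝ)⁻¹ * ∑ i, fi i W)
    -- Muon without momentum (β = 0)
    (η : ℕ → ℝ) (hη : ∀ t, 0 < η t)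
    (b : ℕ → ℕ) (hb : ∀ t, 0 < b t)
    (W g O : ℕ → Ω → EuclideanSpace ℝ (Fin m × Fin n))
    -- O t is a minimizer of ‖O − G_t‖_F over the Stiefel manifold
    (hOmin : ∀ t ω, IsStiefel (O t ω) ∧
      ∀ A : EuclideanSpace ℝ (Fin m × Fin n), IsStiefel A → ‖O t ω - g t ω‖ ≤ ‖A - g t ω‖)
    (hupdate : ∀ t ω, W (t + 1) ω = W t ω - η t • O t ω)
    (hWmeas : ∀ t, StronglyMeasurable[ℱ t] (W t))
    (hgmeas : ∀ t, StronglyMeasurable[ℱ (t + 1)] (g t))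
    (hOmeas : ∀ t, StronglyMeasurable[ℱ (t + 1)] (O t))
    (hgint : ∀ t, Integrable (g t) μ)
    -- (A2)(i): conditional unbiasedness of the mini-batch gradient
    (hunbiased : ∀ t, μ[g t | ℱ t] =ᵐ[μ] fun ω => gradient f (W t ω))
    -- (A2)(ii): conditional 𝔭-variance bound of the mini-batch gradient (Proposition 1)
    (hpvar : ∀ t, ∀ᵐ ω ∂μ,
      (μ[fun ω' => ‖g t ω' - gradient f (W t ω')‖ ^ 𝔭 | ℱ t]) ω ≤
        2 ^ (2 - 𝔭) * σ ^ 𝔭 / (b t : ℝ) ^ (𝔭 - 1))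
    (hinnerint : ∀ t, Integrable (fun ω => ⟪gradient f (W t ω), O t ω⟫_ℝ) μ)
    (hfint : ∀ t, Integrable (fun ω => f (W t ω)) μ)
    (hgradnint : ∀ t, Integrable (fun ω => ‖gradient f (W t ω)‖) μ)
    -- (A3): convexity along the iterates after time t₂
    (t₂ : ℕ)
    (hA3 : ∀ t, t₂ ≤ t → ∀ᵐ ω ∂μ,
      f (W t ω) + ⟪gradient f (W t ω), W (t + 1) ω - W t ω⟫_ℝ ≤ f (W (t + 1) ω))
    -- (A4): C₄ ≥ 0 is a lower bound of (1/√n)(E[f(W_{t₂})] − E[f(W_t)]) for t ≥ t₂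
    (C₄ : ℝ) (hC₄pos : 0 ≤ C₄)
    (hC₄ : ∀ t, t₂ ≤ t →
      C₄ ≤ (Real.sqrt n)⁻¹ * ((∫ ω, f (W t₂ ω) ∂μ) - ∫ ω, f (W t ω) ∂μ)) :
    ∀ T : ℕ,
      C₄ / (∑ t ∈ Finset.Ico t₂ (T + t₂), η t) ≤
        (∑ t ∈ Finset.Ico t₂ (T + t₂), η t)⁻¹ *
          ∑ t ∈ Finset.Ico t₂ (T + t₂), η t * (∫ ω, ‖gradient f (W t ω)‖ ∂μ) := by

  intro T
  set S := ∑ t ∈ Finset.Ico t₂ (T + t₂), η t with hS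
  set D := ∑ t ∈ Finset.Ico t₂ (T + t₂), η t * (∫ ω, ‖gradient f (W t ω)‖ ∂μ) with hD
  have hDnn : 0 ≤ D := Finset.sum_nonneg fun t _ =>
    mul_nonneg (hη t).le (integral_nonneg fun ω => norm_nonneg _)
  rcases Nat.eq_zero_or_pos T with hT | hT
  · subst hT
    simp [hS, hD]
  have hSpos : 0 < S := Finset.sum_pos (fun t _ => hη t)
    (by simpa [Finset.Nonempty, Finset.mem_Ico] using ⟨t₂, le_refl t₂, by omega⟩)
  -- main claim : C₄ ≤ D
  have hmain : C₄ ≤ D := by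
    rcases Nat.eq_zero_or_pos n with hn | hn
    · have := hC₄ t₂ le_rfl
      simp [hn] at this
      linarith
    have hsn : (0:ℝ) < Real.sqrt n := Real.sqrt_pos.2 (by exact_mod_cast hn)
    -- per-step bound
    have step : ∀ t, t₂ ≤ t →
        (∫ ω, f (W t ω) ∂μ) - (∫ ω, f (W (t+1) ω) ∂μ) ≤
          Real.sqrt n * (η t * (∫ ω, ‖gradient f (W t ω)‖ ∂μ)) := by
      intro t ht
      have hpt : ∀ᵐ ω ∂μ, f (W t ω) - f (W (t+1) ω) ≤
          Real.sqrt n * (η t * ‖gradient f (W t ω)‖) := by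
        filter_upwards [hA3 t ht] with ω h3
        have hOn : ‖O t ω‖ = Real.sqrt n := stiefel_norm (hOmin t ω).1
        have hdf : W (t+1) ω - W t ω = -(η t • O t ω) := by
          rw [hupdate t ω]; abel
        rw [hdf, inner_neg_right, inner_smul_right] at h3
        have hcs : ⟪gradient f (W t ω), O t ω⟫_ℝ ≤ ‖gradient f (W t ω)‖ * ‖O t ω‖ :=
          real_inner_le_norm _ _
        rw [hOn] at hcs
        nlinarith [ (hη t).le ]
      have hle := integral_mono_ae ((hfint t).sub (hfint (t+1)))
        (((hgradnint t).const_mul (η t)).const_mul (Real.sqrt n)) hpt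
      rw [show ((fun ω => f (W t ω)) - fun ω => f (W (t+1) ω)) = fun ω => f (W t ω) - f (W (t+1) ω) from rfl, integral_sub (hfint t) (hfint (t+1))] at hle
      simpa [integral_const_mul, mul_assoc] using hle
    -- telescoping
    have htel : (∫ ω, f (W t₂ ω) ∂μ) - (∫ ω, f (W (T + t₂) ω) ∂μ) ≤ Real.sqrt n * D := by
      have : ∀ F : ℕ → ℝ, ∑ t ∈ Finset.Ico t₂ (T + t₂), (F t - F (t+1))
          = F t₂ - F (T + t₂) := by
        intro F
        rw [Finset.sum_Ico_eq_sum_range]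
        have : T + t₂ - t₂ = T := by omega
        rw [this]
        have := Finset.sum_range_sub' (fun i => F (t₂ + i)) T
        simpa [Nat.add_comm, Nat.add_assoc] using this
      calc (∫ ω, f (W t₂ ω) ∂μ) - (∫ ω, f (W (T + t₂) ω) ∂μ)
          = ∑ t ∈ Finset.Ico t₂ (T + t₂),
              ((∫ ω, f (W t ω) ∂μ) - (∫ ω, f (W (t+1) ω) ∂μ)) :=
            (this (fun t => ∫ ω, f (W t ω) ∂μ)).symm
        _ ≤ ∑ t ∈ Finset.Ico t₂ (T + t₂),
              Real.sqrt n * (η t * (∫ ω, ‖gradient f (W t ω)‖ ∂μ)) := by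
            refine Finset.sum_le_sum fun t htmem => step t ?_
            exact (Finset.mem_Ico.1 htmem).1
        _ = Real.sqrt n * D := by rw [hD, Finset.mul_sum]
    have h4 := hC₄ (T + t₂) (by omega)
    have : Real.sqrt n * C₄ ≤ Real.sqrt n * D := by
      calc Real.sqrt n * C₄ ≤ (∫ ω, f (W t₂ ω) ∂μ) - (∫ ω, f (W (T + t₂) ω) ∂μ) := by
            exact (le_inv_mul_iff₀ hsn).1 h4
        _ ≤ Real.sqrt n * D := htel
    exact le_of_mul_le_mul_left this hsn
  rw [div_eq_inv_mul]
  exact mul_le_mul_of_nonneg_left hmain (inv_nonneg.2 hSpos.le)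
end

section
/- Lower convergence bound for Muon with momentum: let (W_t) be generated by Muon with momentum β ∈ [0,1) under Assumptions (A1) and (A2). Suppose there exists t₂ ∈ ℕ such that for all t ≥ t₂ the convexity inequality f(W_{t+1}) ≥ f(W_t) + ∇f(W_t) • (W_{t+1} − W_t) holds almost surely (Assumption (A3)), and that C₆ := (1/√n) inf{E[f(W_{t₂})] − E[f(W_t)] : t ≥ t₂} ≥ 0 (Assumption (A4)). Then for all T ∈ ℕ: (1/Σ_{t=t₂}^{T+t₂−1} η_t) Σ_{t=t₂}^{T+t₂−1} η_t E[‖∇f(W_t)‖_F] ≥ C₆ / Σ_{t=t₂}^{T+t₂−1} η_t. -/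
open MeasureTheory ProbabilityTheory Real Filter Matrix
open scoped InnerProductSpace BigOperators

/-- **Lower convergence bound for Muon with momentum** (Theorem 5.3). Under the local convexity
assumption (A3) along the iterates from time `t₂` on, and (A4) `C₆ ≥ 0` being a lower bound of
`(1/√n)(E[f(W_{t₂})] − E[f(W_t)])` for `t ≥ t₂`, the weighted Cesàro mean of `E[‖∇f(W_t)‖_F]`
is at least `C₆ / Σ_{t=t₂}^{T+t₂−1} η_t`. -/
theorem muon_momentum_lower_convergence_bound
    {m n N : ℕ} (hN : 0 < N) (hnm : n ≤ m)
    {Ω : Type*} {mΩ : MeasurableSpace Ω} (μ : Measure Ω) [IsProbabilityMeasure μ]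
    (ℱ : Filtration ℕ mΩ)
    (fi : Fin N → EuclideanSpace ℝ (Fin m × Fin n) → ℝ)
    (Li : Fin N → ℝ) (ν 𝔭 σ : ℝ)
    (hLi : ∀ i, 0 < Li i)
    (hν : ν ∈ Set.Ioc (0 : ℝ) 1) (h𝔭 : 𝔭 ∈ Set.Ioc (1 : ℝ) 2) (hσ : 0 ≤ σ)
    -- (A1): Hölder smoothness and finite infima
    (hdiff : ∀ i, Differentiable ℝ (fi i))
    (hholder : ∀ i, ∀ W₁ W₂ : EuclideanSpace ℝ (Fin m × Fin n),
      ‖gradient (fi i) W₁ - gradient (fi i) W₂‖ ≤ Li i * ‖W₁ - W₂‖ ^ ν)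
    (hbdd : ∀ i, BddBelow (Set.range (fi i)))
    -- empirical risk
    (f : EuclideanSpace ℝ (Fin m × Fin n) → ℝ)
    (hf : ∀ V, f V = (N : ℝ)⁻¹ * ∑ i, fi i V)
    -- Muon with momentum β ∈ [0,1)
    (β : ℝ) (hβ : β ∈ Set.Ico (0 : ℝ) 1)
    (η : ℕ → ℝ) (hη : ∀ t, 0 < η t)
    (b : ℕ → ℕ) (hb : ∀ t, 0 < b t)
    (W g M O : ℕ → Ω → EuclideanSpace ℝ (Fin m × Fin n))
    (Mneg : Ω → EuclideanSpace ℝ (Fin m × Fin n))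
    -- momentum recursion M_t = β M_{t−1} + (1−β) ∇f_{ξ_t}(W_t)
    (hM0 : ∀ ω, M 0 ω = β • Mneg ω + (1 - β) • g 0 ω)
    (hMrec : ∀ t ω, M (t + 1) ω = β • M t ω + (1 - β) • g (t + 1) ω)
    -- O t is a minimizer of ‖O − M_t‖_F over the Stiefel manifold
    (hOmin : ∀ t ω, IsStiefel (O t ω) ∧
      ∀ A : EuclideanSpace ℝ (Fin m × Fin n), IsStiefel A → ‖O t ω - M t ω‖ ≤ ‖A - M t ω‖)
    (hupdate : ∀ t ω, W (t + 1) ω = W t ω - η t • O t ω)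
    (hWmeas : ∀ t, StronglyMeasurable[ℱ t] (W t))
    (hgmeas : ∀ t, StronglyMeasurable[ℱ (t + 1)] (g t))
    (hOmeas : ∀ t, StronglyMeasurable[ℱ (t + 1)] (O t))
    (hgint : ∀ t, Integrable (g t) μ)
    -- (A2)(i): conditional unbiasedness of the mini-batch gradient
    (hunbiased : ∀ t, μ[g t | ℱ t] =ᵐ[μ] fun ω => gradient f (W t ω))
    -- (A2)(ii): conditional 𝔭-variance bound of the mini-batch gradient (Proposition 1)
    (hpvar : ∀ t, ∀ᵐ ω ∂μ,
      (μ[fun ω' => ‖g t ω' - gradient f (W t ω')‖ ^ 𝔭 | ℱ t]) ω ≤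
        2 ^ (2 - 𝔭) * σ ^ 𝔭 / (b t : ℝ) ^ (𝔭 - 1))
    (hinnerint : ∀ t, Integrable (fun ω => ⟪gradient f (W t ω), O t ω⟫_ℝ) μ)
    (hfint : ∀ t, Integrable (fun ω => f (W t ω)) μ)
    (hgradnint : ∀ t, Integrable (fun ω => ‖gradient f (W t ω)‖) μ)
    -- (A3): convexity along the iterates after time t₂
    (t₂ : ℕ)
    (hA3 : ∀ t, t₂ ≤ t → ∀ᵐ ω ∂μ,
      f (W t ω) + ⟪gradient f (W t ω), W (t + 1) ω - W t ω⟫_ℝ ≤ f (W (t + 1) ω))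
    -- (A4): C₆ ≥ 0 is a lower bound of (1/√n)(E[f(W_{t₂})] − E[f(W_t)]) for t ≥ t₂
    (C₆ : ℝ) (hC₆pos : 0 ≤ C₆)
    (hC₆ : ∀ t, t₂ ≤ t →
      C₆ ≤ (Real.sqrt n)⁻¹ * ((∫ ω, f (W t₂ ω) ∂μ) - ∫ ω, f (W t ω) ∂μ)) :
    ∀ T : ℕ,
      C₆ / (∑ t ∈ Finset.Ico t₂ (T + t₂), η t) ≤
        (∑ t ∈ Finset.Ico t₂ (T + t₂), η t)⁻¹ *
          ∑ t ∈ Finset.Ico t₂ (T + t₂), η t * (∫ ω, ‖gradient f (W t ω)‖ ∂μ) := by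
  intro T
  have hSnonneg : 0 ≤ ∑ t ∈ Finset.Ico t₂ (T + t₂), η t :=
    Finset.sum_nonneg fun t _ => (hη t).le
  have hstep : ∀ t, t₂ ≤ t →
      (∫ ω, f (W t ω) ∂μ) - (∫ ω, f (W (t + 1) ω) ∂μ) ≤
        Real.sqrt n * (η t * ∫ ω, ‖gradient f (W t ω)‖ ∂μ) := by
    intro t ht
    have hpt : ∀ᵐ ω ∂μ, f (W t ω) - f (W (t + 1) ω) ≤
        Real.sqrt n * (η t * ‖gradient f (W t ω)‖) := by
      filter_upwards [hA3 t ht] with ω hω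
      have hO : ‖O t ω‖ = Real.sqrt n := stiefel_norm (hOmin t ω).1
      have hup : W (t + 1) ω - W t ω = -(η t • O t ω) := by
        rw [hupdate t ω]; abel
      have hin : ⟪gradient f (W t ω), W (t + 1) ω - W t ω⟫_ℝ =
          -(η t * ⟪gradient f (W t ω), O t ω⟫_ℝ) := by
        rw [hup, inner_neg_right, real_inner_smul_right]
      have hcs : ⟪gradient f (W t ω), O t ω⟫_ℝ ≤ ‖gradient f (W t ω)‖ * ‖O t ω‖ :=
        real_inner_le_norm _ _
      have hcs' : η t * ⟪gradient f (W t ω), O t ω⟫_ℝ ≤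
          η t * (‖gradient f (W t ω)‖ * Real.sqrt n) := by
        rw [← hO]; exact mul_le_mul_of_nonneg_left hcs (hη t).le
      rw [hin] at hω
      nlinarith [hω, hcs']
    have hint := integral_mono_ae ((hfint t).sub (hfint (t + 1)))
      (((hgradnint t).const_mul (η t)).const_mul (Real.sqrt n)) hpt
    simp only [Pi.sub_apply] at hint
    rwa [integral_sub (hfint t) (hfint (t + 1)), integral_const_mul, integral_const_mul] at hint
  have tele : ∀ T : ℕ, (∫ ω, f (W t₂ ω) ∂μ) - (∫ ω, f (W (T + t₂) ω) ∂μ) ≤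
      Real.sqrt n * ∑ t ∈ Finset.Ico t₂ (T + t₂), η t * ∫ ω, ‖gradient f (W t ω)‖ ∂μ := by
    intro T
    induction T with
    | zero => simp
    | succ T ih =>
      have h1 : t₂ ≤ T + t₂ := Nat.le_add_left _ _
      rw [show T + 1 + t₂ = (T + t₂) + 1 from by omega, Finset.sum_Ico_succ_top h1, mul_add]
      have := hstep (T + t₂) h1
      linarith
  have key : C₆ ≤ ∑ t ∈ Finset.Ico t₂ (T + t₂), η t * ∫ ω, ‖gradient f (W t ω)‖ ∂μ := by
    have hsum_nonneg : 0 ≤ ∑ t ∈ Finset.Ico t₂ (T + t₂),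
        η t * ∫ ω, ‖gradient f (W t ω)‖ ∂μ :=
      Finset.sum_nonneg fun t _ =>
        mul_nonneg (hη t).le (integral_nonneg fun ω => norm_nonneg _)
    rcases Nat.eq_zero_or_pos n with hn | hn
    · have h0 := hC₆ t₂ le_rfl
      simp [hn] at h0
      linarith
    · have hs : (0 : ℝ) < Real.sqrt n := Real.sqrt_pos.2 (by exact_mod_cast hn)
      have h1 := hC₆ (T + t₂) (Nat.le_add_left _ _)
      have h2 := tele T
      have h3 : C₆ ≤ (Real.sqrt n)⁻¹ *
          (Real.sqrt n * ∑ t ∈ Finset.Ico t₂ (T + t₂),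
            η t * ∫ ω, ‖gradient f (W t ω)‖ ∂μ) :=
        le_trans h1 (mul_le_mul_of_nonneg_left h2 (inv_nonneg.2 hs.le))
      rwa [inv_mul_cancel_left₀ hs.ne'] at h3
  rw [div_eq_mul_inv, mul_comm]
  exact mul_le_mul_of_nonneg_left key (inv_nonneg.2 hSnonneg)
end
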